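/- (Bouton's theorem) A position in Nim, given as a finite multiset of pile sizes, is a previous-player win (P-position) if and only if the bitwise XOR (nim-sum) of the pile sizes is zero. Equivalently: if the nim-sum is zero, every move leads to a position with nonzero nim-sum, and if the nim-sum is nonzero, there exists a move to a position with nim-sum zero. -/

import Mathlib

instance : Std.Commutative (α := ℕ) (· ^^^ ·) := ⟨Nat.xor_comm⟩
instance : Std.Associative (α := ℕ) (· ^^^ ·) := ⟨Nat.xor_assoc⟩

/-- The nim-sum (bitwise XOR) of a finite multiset of pile sizes. -/
def nimSum (s : Multiset ℕ) : ℕ := Multiset.fold (· ^^^ ·) 0 s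

/-- A move in Nim: remove a positive number of counters from a single pile,
i.e. replace some pile of size `a` by a pile of size `b < a`. -/
def NimMove (s t : Multiset ℕ) : Prop :=
  ∃ a ∈ s, ∃ b < a, t = b ::ₘ s.erase a

mutual
/-- `PPos s` : `s` is a previous-player win (the player to move loses):
every move leads to a next-player win. -/
inductive PPos : Multiset ℕ → Prop
  | mk (s : Multiset ℕ) : (∀ t, NimMove s t → NPos t) → PPos s

/-- `NPos s` : `s` is a next-player win: some move leads to a previous-player
win. -/
inductive NPos : Multiset ℕ → Prop
  | mk (s t : Multiset ℕ) : NimMove s t → PPos t → NPos s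
end

lemma nimSum_cons (b : ℕ) (s : Multiset ℕ) : nimSum (b ::ₘ s) = b ^^^ nimSum s :=
  Multiset.fold_cons_left _ _ _ _

lemma nimSum_erase {a : ℕ} {s : Multiset ℕ} (h : a ∈ s) :
    nimSum s = a ^^^ nimSum (s.erase a) := by
  conv_lhs => rw [← Multiset.cons_erase h]
  exact nimSum_cons _ _

lemma nimMove_sum_lt {s t : Multiset ℕ} (h : NimMove s t) : t.sum < s.sum := by
  obtain ⟨a, ha, b, hb, rfl⟩ := h
  conv_rhs => rw [← Multiset.cons_erase ha]
  simp only [Multiset.sum_cons]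
  omega

lemma exists_mem_testBit (d : ℕ) :
    ∀ s : Multiset ℕ, Nat.testBit (nimSum s) d = true → ∃ a ∈ s, Nat.testBit a d = true := by
  intro s
  induction s using Multiset.induction with
  | empty => simp [nimSum]
  | cons a s ih =>
    rw [nimSum_cons, Nat.testBit_xor]
    intro h
    cases hta : Nat.testBit a d with
    | true => exact ⟨a, Multiset.mem_cons_self a s, hta⟩
    | false =>
      rw [hta, Bool.false_xor] at h
      obtain ⟨c, hc, hcd⟩ := ih h
      exact ⟨c, Multiset.mem_cons_of_mem hc, hcd⟩

theorem Nat.xor_eq_zero {n m : ℕ} : n ^^^ m = 0 ↔ n = m := by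
  constructor
  · intro h
    have := congrArg (· ^^^ m) h
    simpa [Nat.xor_assoc, Nat.xor_self] using this
  · rintro rfl
    exact Nat.xor_self n

lemma moveA {s : Multiset ℕ} (h0 : nimSum s = 0) :
    ∀ t, NimMove s t → nimSum t ≠ 0 := by
  intro t ht
  obtain ⟨a, ha, b, hb, rfl⟩ := ht
  have he : nimSum (s.erase a) = a := by
    have h' := nimSum_erase ha
    rw [h0] at h'
    exact (Nat.xor_eq_zero.mp h'.symm).symm
  rw [nimSum_cons, he]
  intro h
  exact absurd (Nat.xor_eq_zero.mp h) (Nat.ne_of_lt hb)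

lemma moveB {s : Multiset ℕ} (h0 : nimSum s ≠ 0) :
    ∃ t, NimMove s t ∧ nimSum t = 0 := by
  set n := nimSum s with hn
  set d := Nat.log2 n with hd
  have hnd : Nat.testBit n d = true := by
    rw [Nat.testBit_eq_decide_div_mod_eq]
    have h1 : n / 2 ^ d = 1 := by
      have hle : 2 ^ d ≤ n := Nat.log2_self_le h0
      have hlt : n < 2 ^ (d + 1) := Nat.lt_log2_self
      rw [pow_succ] at hlt
      have hp : 0 < 2 ^ d := Nat.pow_pos (n := d) (by norm_num)
      refine Nat.div_eq_of_lt_le (by omega) (by omega)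
    simp [h1]
  have hhigh : ∀ j, d < j → Nat.testBit n j = false := by
    intro j hj
    exact Nat.testBit_lt_two_pow (lt_of_lt_of_le Nat.lt_log2_self (Nat.pow_le_pow_right (by norm_num) hj))
  obtain ⟨a, ha, had⟩ := exists_mem_testBit d s hnd
  refine ⟨(a ^^^ n) ::ₘ s.erase a, ⟨a, ha, a ^^^ n, ?_, rfl⟩, ?_⟩
  · apply Nat.lt_of_testBit d
    · rw [Nat.testBit_xor, had, hnd]; rfl
    · exact had
    · intro j hj
      rw [Nat.testBit_xor, hhigh j hj, Bool.xor_false]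
  · have he : nimSum (s.erase a) = a ^^^ n := by
      have h' := nimSum_erase ha
      rw [← hn] at h'
      rw [h', ← Nat.xor_assoc, Nat.xor_self, Nat.zero_xor]
    rw [nimSum_cons, he, Nat.xor_self]

lemma key : ∀ n : ℕ, ∀ s : Multiset ℕ, s.sum ≤ n → (PPos s ↔ nimSum s = 0) := by
  intro n
  induction n using Nat.strong_induction_on with
  | _ n ih =>
    intro s hs
    constructor
    · intro hP
      by_contra h
      obtain ⟨t, ht, htz⟩ := moveB h
      obtain ⟨_, hall⟩ := hP
      obtain ⟨_, u, htu, hPu⟩ := hall t ht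
      have hut : u.sum < t.sum := nimMove_sum_lt htu
      have hts : t.sum < s.sum := nimMove_sum_lt ht
      have : nimSum u = 0 := (ih u.sum (by omega) u le_rfl).mp hPu
      exact moveA htz u htu this
    · intro h0
      refine PPos.mk s fun t ht => ?_
      have hne := moveA h0 t ht
      obtain ⟨u, htu, huz⟩ := moveB hne
      have hut : u.sum < t.sum := nimMove_sum_lt htu
      have hts : t.sum < s.sum := nimMove_sum_lt ht
      exact NPos.mk t u htu ((ih u.sum (by omega) u le_rfl).mpr huz)

/-- Bouton's theorem: a Nim position is a P-position iff its nim-sum is zero.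
Equivalently, from a position of nim-sum zero every move leads to nonzero
nim-sum, and from a position of nonzero nim-sum some move leads to nim-sum
zero. -/
theorem stmt2 (s : Multiset ℕ) :
    (PPos s ↔ nimSum s = 0) ∧
    (nimSum s = 0 → ∀ t, NimMove s t → nimSum t ≠ 0) ∧
    (nimSum s ≠ 0 → ∃ t, NimMove s t ∧ nimSum t = 0) := by
  exact ⟨key s.sum s le_rfl, moveA, moveB⟩
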